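/- Let H be a complex Hilbert space and let M_1, M_2, N_1, N_2 be closed subspaces of H such that M_1 ⊥ M_2, M_1 ⊥ N_2, M_2 ⊥ N_1 and N_1 ⊥ N_2. Then c(M_1 ⊕ M_2, N_1 ⊕ N_2) = max( c(M_1, N_1), c(M_2, N_2) ), where M_1 ⊕ M_2 and N_1 ⊕ N_2 denote the (closed) sums of the respective orthogonal subspaces. -/

import Mathlib

/-- The orthogonal projection onto a subspace `K` of a complex inner product space,
as a bounded operator on the whole space (junk value `0` if `K` does not admit an
orthogonal projection; for a closed subspace of a Hilbert space it is the genuine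
orthogonal projection). -/
noncomputable def proj {H : Type*} [NormedAddCommGroup H] [InnerProductSpace ℂ H]
    (K : Submodule ℂ H) : H →L[ℂ] H :=
  letI := Classical.propDecidable (K.HasOrthogonalProjection)
  if h : K.HasOrthogonalProjection then
    haveI := h
    K.subtypeL.comp (K.orthogonalProjection)
  else 0

/-- The cosine of the Friedrichs angle between two (closed) subspaces `M`, `N`:
`c(M,N) = ‖P_M P_N - P_{M ∩ N}‖`. -/
noncomputable def friedrichs {H : Type*} [NormedAddCommGroup H] [InnerProductSpace ℂ H]
    (M N : Submodule ℂ H) : ℝ :=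
  ‖proj M * proj N - proj (M ⊓ N)‖

section Aux

variable {H : Type*} [NormedAddCommGroup H] [InnerProductSpace ℂ H]

local notation "⟪" x ", " y "⟫" => @inner ℂ _ _ x y

theorem proj_apply (K : Submodule ℂ H) [h : Submodule.HasOrthogonalProjection K] (x : H) :
    proj K x = (Submodule.orthogonalProjection K x : H) := by
  rw [proj, dif_pos h]; rfl

theorem proj_mem (K : Submodule ℂ H) [Submodule.HasOrthogonalProjection K] (x : H) :
    proj K x ∈ K := by
  rw [proj_apply]; exact (Submodule.orthogonalProjection K x).2

theorem sub_proj_mem (K : Submodule ℂ H) [Submodule.HasOrthogonalProjection K] (x : H) :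
    x - proj K x ∈ Kᗮ := by
  rw [proj_apply]; exact K.sub_starProjection_mem_orthogonal x

theorem proj_eq_of {K : Submodule ℂ H} [Submodule.HasOrthogonalProjection K] {u v : H}
    (hv : v ∈ K) (huv : u - v ∈ Kᗮ) : proj K u = v := by
  rw [proj_apply]; exact K.eq_starProjection_of_mem_orthogonal hv huv

theorem norm_proj_le (K : Submodule ℂ H) [Submodule.HasOrthogonalProjection K] (x : H) :
    ‖proj K x‖ ≤ ‖x‖ := by
  rw [proj_apply]
  calc ‖(Submodule.orthogonalProjection K x : H)‖ = ‖Submodule.orthogonalProjection K x‖ := rfl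
    _ ≤ ‖Submodule.orthogonalProjection K‖ * ‖x‖ := (Submodule.orthogonalProjection K).le_opNorm x
    _ ≤ 1 * ‖x‖ := by
        exact mul_le_mul_of_nonneg_right (Submodule.orthogonalProjection_norm_le K) (norm_nonneg x)
    _ = ‖x‖ := one_mul ‖x‖

theorem hasOrthogonalProjection_sup {K₁ K₂ : Submodule ℂ H} [Submodule.HasOrthogonalProjection K₁]
    [Submodule.HasOrthogonalProjection K₂] (h : K₂ ≤ K₁ᗮ) :
    Submodule.HasOrthogonalProjection (K₁ ⊔ K₂) := by
  constructor
  intro v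
  refine ⟨proj K₁ v + proj K₂ v, Submodule.add_mem_sup (proj_mem K₁ v) (proj_mem K₂ v), ?_⟩
  rw [Submodule.mem_orthogonal']
  intro u hu
  rcases Submodule.mem_sup.1 hu with ⟨a, ha, b, hb, rfl⟩
  have h1 : ⟪v - proj K₁ v, a⟫ = 0 := (Submodule.mem_orthogonal' _ _).1 (sub_proj_mem K₁ v) a ha
  have h2 : ⟪v - proj K₂ v, b⟫ = 0 := (Submodule.mem_orthogonal' _ _).1 (sub_proj_mem K₂ v) b hb
  have h3 : ⟪proj K₂ v, a⟫ = 0 :=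
    (Submodule.mem_orthogonal' _ _).1 (h (proj_mem K₂ v)) a ha
  have h4 : ⟪proj K₁ v, b⟫ = 0 := by
    have := (Submodule.mem_orthogonal' _ _).1 (h hb) _ (proj_mem K₁ v)
    rwa [inner_eq_zero_symm]
  have e1 : ⟪v - (proj K₁ v + proj K₂ v), a⟫ = 0 := by
    have : v - (proj K₁ v + proj K₂ v) = (v - proj K₁ v) - proj K₂ v := by abel
    rw [this, inner_sub_left, h1, h3, sub_zero]
  have e2 : ⟪v - (proj K₁ v + proj K₂ v), b⟫ = 0 := by
    have : v - (proj K₁ v + proj K₂ v) = (v - proj K₂ v) - proj K₁ v := by abel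
    rw [this, inner_sub_left, h2, h4, sub_zero]
  rw [inner_add_right, e1, e2, add_zero]

theorem proj_sup {K₁ K₂ : Submodule ℂ H} [Submodule.HasOrthogonalProjection K₁]
    [Submodule.HasOrthogonalProjection K₂] [Submodule.HasOrthogonalProjection (K₁ ⊔ K₂)] (h : K₂ ≤ K₁ᗮ) :
    proj (K₁ ⊔ K₂) = proj K₁ + proj K₂ := by
  ext x
  show proj (K₁ ⊔ K₂) x = proj K₁ x + proj K₂ x
  apply proj_eq_of (Submodule.add_mem_sup (proj_mem K₁ x) (proj_mem K₂ x))
  rw [Submodule.mem_orthogonal']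
  intro u hu
  rcases Submodule.mem_sup.1 hu with ⟨a, ha, b, hb, rfl⟩
  have h1 : ⟪x - proj K₁ x, a⟫ = 0 := (Submodule.mem_orthogonal' _ _).1 (sub_proj_mem K₁ x) a ha
  have h2 : ⟪x - proj K₂ x, b⟫ = 0 := (Submodule.mem_orthogonal' _ _).1 (sub_proj_mem K₂ x) b hb
  have h3 : ⟪proj K₂ x, a⟫ = 0 :=
    (Submodule.mem_orthogonal' _ _).1 (h (proj_mem K₂ x)) a ha
  have h4 : ⟪proj K₁ x, b⟫ = 0 := by
    have := (Submodule.mem_orthogonal' _ _).1 (h hb) _ (proj_mem K₁ x)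
    rwa [inner_eq_zero_symm]
  have e1 : ⟪x - (proj K₁ x + proj K₂ x), a⟫ = 0 := by
    have : x - (proj K₁ x + proj K₂ x) = (x - proj K₁ x) - proj K₂ x := by abel
    rw [this, inner_sub_left, h1, h3, sub_zero]
  have e2 : ⟪x - (proj K₁ x + proj K₂ x), b⟫ = 0 := by
    have : x - (proj K₁ x + proj K₂ x) = (x - proj K₂ x) - proj K₁ x := by abel
    rw [this, inner_sub_left, h2, h4, sub_zero]
  rw [inner_add_right, e1, e2, add_zero]

theorem proj_comp_of_le {K L : Submodule ℂ H} [Submodule.HasOrthogonalProjection K]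
    [Submodule.HasOrthogonalProjection L] (h : K ≤ L) : proj K * proj L = proj K := by
  ext x
  show proj K (proj L x) = proj K x
  have : proj K x = proj K x := rfl
  apply proj_eq_of (proj_mem K x)
  have : proj L x - proj K x = (proj L x - x) + (x - proj K x) := by abel
  rw [this]
  exact Submodule.add_mem _
    (Submodule.orthogonal_le h (by simpa using Submodule.neg_mem _ (sub_proj_mem L x)))
    (sub_proj_mem K x)

theorem proj_comp_eq_zero {K₁ K₂ : Submodule ℂ H} [Submodule.HasOrthogonalProjection K₁]
    [Submodule.HasOrthogonalProjection K₂] (h : K₂ ≤ K₁ᗮ) : proj K₁ * proj K₂ = 0 := by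
  ext x
  show proj K₁ (proj K₂ x) = 0
  apply proj_eq_of (Submodule.zero_mem K₁)
  simpa using h (proj_mem K₂ x)

theorem opNorm_add_max (A B Q₁ Q₂ : H →L[ℂ] H)
    (hAB : ∀ x y : H, ⟪A x, B y⟫ = 0)
    (hA : A * Q₁ = A) (hB : B * Q₂ = B)
    (hQ : ∀ x : H, ‖Q₁ x‖ * ‖Q₁ x‖ + ‖Q₂ x‖ * ‖Q₂ x‖ ≤ ‖x‖ * ‖x‖) :
    ‖A + B‖ = max ‖A‖ ‖B‖ := by
  have pyth : ∀ x : H, ‖A x + B x‖ * ‖A x + B x‖ = ‖A x‖ * ‖A x‖ + ‖B x‖ * ‖B x‖ :=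
    fun x => norm_add_sq_eq_norm_sq_add_norm_sq_of_inner_eq_zero _ _ (hAB x x)
  apply le_antisymm
  · apply ContinuousLinearMap.opNorm_le_bound _ (le_max_iff.2 (Or.inl (norm_nonneg A)))
    intro x
    refine le_of_pow_le_pow_left₀ two_ne_zero (by positivity) ?_
    have hAx : ‖A x‖ ≤ ‖A‖ * ‖Q₁ x‖ := by
      have e : A x = A (Q₁ x) := (ContinuousLinearMap.ext_iff.1 hA x).symm
      rw [e]; exact A.le_opNorm _
    have hBx : ‖B x‖ ≤ ‖B‖ * ‖Q₂ x‖ := by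
      have e : B x = B (Q₂ x) := (ContinuousLinearMap.ext_iff.1 hB x).symm
      rw [e]; exact B.le_opNorm _
    have hAm : ‖A‖ ≤ max ‖A‖ ‖B‖ := le_max_left _ _
    have hBm : ‖B‖ ≤ max ‖A‖ ‖B‖ := le_max_right _ _
    have hQx := hQ x
    have h1 : ‖(A + B) x‖ * ‖(A + B) x‖ = ‖A x‖ * ‖A x‖ + ‖B x‖ * ‖B x‖ := pyth x
    have hq1 : (0:ℝ) ≤ ‖Q₁ x‖ := norm_nonneg _
    have hq2 : (0:ℝ) ≤ ‖Q₂ x‖ := norm_nonneg _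
    have hAnn : (0:ℝ) ≤ ‖A‖ := norm_nonneg _
    have hBnn : (0:ℝ) ≤ ‖B‖ := norm_nonneg _
    have hax : (0:ℝ) ≤ ‖A x‖ := norm_nonneg _
    have hbx : (0:ℝ) ≤ ‖B x‖ := norm_nonneg _
    have hxn : (0:ℝ) ≤ ‖x‖ := norm_nonneg _
    set m : ℝ := max ‖A‖ ‖B‖ with hm_def
    have hm : (0:ℝ) ≤ m := le_trans hAnn hAm
    have s1 : ‖A x‖ * ‖A x‖ ≤ (‖A‖ * ‖Q₁ x‖) * (‖A‖ * ‖Q₁ x‖) :=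
      mul_le_mul hAx hAx hax (by positivity)
    have s2 : ‖B x‖ * ‖B x‖ ≤ (‖B‖ * ‖Q₂ x‖) * (‖B‖ * ‖Q₂ x‖) :=
      mul_le_mul hBx hBx hbx (by positivity)
    have s3 : ‖A‖ * ‖A‖ * (‖Q₁ x‖ * ‖Q₁ x‖) ≤ m * m * (‖Q₁ x‖ * ‖Q₁ x‖) :=
      mul_le_mul_of_nonneg_right (mul_le_mul hAm hAm hAnn hm) (mul_nonneg hq1 hq1)
    have s4 : ‖B‖ * ‖B‖ * (‖Q₂ x‖ * ‖Q₂ x‖) ≤ m * m * (‖Q₂ x‖ * ‖Q₂ x‖) :=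
      mul_le_mul_of_nonneg_right (mul_le_mul hBm hBm hBnn hm) (mul_nonneg hq2 hq2)
    have s5 : m * m * (‖Q₁ x‖ * ‖Q₁ x‖ + ‖Q₂ x‖ * ‖Q₂ x‖) ≤ m * m * (‖x‖ * ‖x‖) :=
      mul_le_mul_of_nonneg_left hQx (mul_nonneg hm hm)
    nlinarith [s1, s2, s3, s4, s5, h1]
  · apply max_le
    · apply ContinuousLinearMap.opNorm_le_bound _ (norm_nonneg _)
      intro x
      refine le_of_pow_le_pow_left₀ two_ne_zero (by positivity) ?_
      have h1 := pyth x
      have h2 := (A + B).le_opNorm x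
      have : ‖(A + B) x‖ = ‖A x + B x‖ := rfl
      nlinarith [norm_nonneg (B x), norm_nonneg (A x + B x), norm_nonneg (A + B), norm_nonneg x,
        mul_le_mul h2 h2 (norm_nonneg _) (by positivity)]
    · apply ContinuousLinearMap.opNorm_le_bound _ (norm_nonneg _)
      intro x
      refine le_of_pow_le_pow_left₀ two_ne_zero (by positivity) ?_
      have h1 := pyth x
      have h2 := (A + B).le_opNorm x
      have : ‖(A + B) x‖ = ‖A x + B x‖ := rfl
      nlinarith [norm_nonneg (A x), norm_nonneg (A x + B x), norm_nonneg (A + B), norm_nonneg x,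
        mul_le_mul h2 h2 (norm_nonneg _) (by positivity)]

end Aux

theorem stmt11 {H : Type*} [NormedAddCommGroup H] [InnerProductSpace ℂ H] [CompleteSpace H]
    (M₁ M₂ N₁ N₂ : Submodule ℂ H)
    (hM₁ : IsClosed (M₁ : Set H)) (hM₂ : IsClosed (M₂ : Set H))
    (hN₁ : IsClosed (N₁ : Set H)) (hN₂ : IsClosed (N₂ : Set H))
    (hMM : ∀ x ∈ M₁, ∀ y ∈ M₂, (inner ℂ x y : ℂ) = 0)
    (hMN : ∀ x ∈ M₁, ∀ y ∈ N₂, (inner ℂ x y : ℂ) = 0)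
    (hNM : ∀ x ∈ M₂, ∀ y ∈ N₁, (inner ℂ x y : ℂ) = 0)
    (hNN : ∀ x ∈ N₁, ∀ y ∈ N₂, (inner ℂ x y : ℂ) = 0) :
    friedrichs (M₁ ⊔ M₂) (N₁ ⊔ N₂) = max (friedrichs M₁ N₁) (friedrichs M₂ N₂) := by
  haveI : CompleteSpace M₁ := hM₁.completeSpace_coe
  haveI : CompleteSpace M₂ := hM₂.completeSpace_coe
  haveI : CompleteSpace N₁ := hN₁.completeSpace_coe
  haveI : CompleteSpace N₂ := hN₂.completeSpace_coe
  haveI : CompleteSpace (M₁ ⊓ N₁ : Submodule ℂ H) := by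
    refine IsClosed.completeSpace_coe (hs := ?_)
    rw [Submodule.coe_inf]; exact hM₁.inter hN₁
  haveI : CompleteSpace (M₂ ⊓ N₂ : Submodule ℂ H) := by
    refine IsClosed.completeSpace_coe (hs := ?_)
    rw [Submodule.coe_inf]; exact hM₂.inter hN₂
  have oMM : M₂ ≤ M₁ᗮ := fun y hy => (Submodule.mem_orthogonal M₁ y).2 fun x hx => hMM x hx y hy
  have oMN : N₂ ≤ M₁ᗮ := fun y hy => (Submodule.mem_orthogonal M₁ y).2 fun x hx => hMN x hx y hy
  have oNM : N₁ ≤ M₂ᗮ := fun y hy => (Submodule.mem_orthogonal M₂ y).2 fun x hx => hNM x hx y hy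
  have oNN : N₂ ≤ N₁ᗮ := fun y hy => (Submodule.mem_orthogonal N₁ y).2 fun x hx => hNN x hx y hy
  have oII : M₂ ⊓ N₂ ≤ (M₁ ⊓ N₁)ᗮ :=
    le_trans (le_trans inf_le_left oMM) (Submodule.orthogonal_le inf_le_left)
  haveI : Submodule.HasOrthogonalProjection (M₁ ⊔ M₂) := hasOrthogonalProjection_sup oMM
  haveI : Submodule.HasOrthogonalProjection (N₁ ⊔ N₂) := hasOrthogonalProjection_sup oNN
  haveI : Submodule.HasOrthogonalProjection ((M₁ ⊓ N₁) ⊔ (M₂ ⊓ N₂)) := hasOrthogonalProjection_sup oII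
  -- decomposition of the intersection
  have hinf : (M₁ ⊔ M₂) ⊓ (N₁ ⊔ N₂) = (M₁ ⊓ N₁) ⊔ (M₂ ⊓ N₂) := by
    apply le_antisymm
    · rintro x ⟨hxM, hxN⟩
      rcases Submodule.mem_sup.1 hxM with ⟨m₁, hm₁, m₂, hm₂, rfl⟩
      rcases Submodule.mem_sup.1 hxN with ⟨n₁, hn₁, n₂, hn₂, hx⟩
      have hd : m₁ - n₁ = n₂ - m₂ := by
        rw [sub_eq_sub_iff_add_eq_add, ← hx, add_comm]
      have h0 : (inner ℂ (m₁ - n₁) (n₂ - m₂) : ℂ) = 0 := by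
        rw [inner_sub_left, inner_sub_right, inner_sub_right,
          hMN m₁ hm₁ n₂ hn₂, hMM m₁ hm₁ m₂ hm₂, hNN n₁ hn₁ n₂ hn₂,
          inner_eq_zero_symm.2 (hNM m₂ hm₂ n₁ hn₁)]
        ring
      have h0' : (inner ℂ (m₁ - n₁) (m₁ - n₁) : ℂ) = 0 := by
        nth_rewrite 2 [hd]; exact h0
      have he : m₁ - n₁ = 0 := inner_self_eq_zero.1 h0'
      have he1 : m₁ = n₁ := sub_eq_zero.1 he
      have he2 : n₂ = m₂ := sub_eq_zero.1 (hd ▸ he)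
      refine Submodule.mem_sup.2 ⟨m₁, ⟨hm₁, he1 ▸ hn₁⟩, m₂, ⟨hm₂, he2 ▸ hn₂⟩, rfl⟩
    · exact sup_le (le_inf (inf_le_left.trans le_sup_left) (inf_le_right.trans le_sup_left))
        (le_inf (inf_le_left.trans le_sup_right) (inf_le_right.trans le_sup_right))
  rw [friedrichs, friedrichs, friedrichs, hinf, proj_sup oMM, proj_sup oNN, proj_sup oII]
  have key : (proj M₁ + proj M₂) * (proj N₁ + proj N₂) - (proj (M₁ ⊓ N₁) + proj (M₂ ⊓ N₂)) =
      (proj M₁ * proj N₁ - proj (M₁ ⊓ N₁)) + (proj M₂ * proj N₂ - proj (M₂ ⊓ N₂)) := by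
    rw [add_mul, mul_add, mul_add, proj_comp_eq_zero oMN, proj_comp_eq_zero oNM]
    abel
  rw [key]
  apply opNorm_add_max
  · intro x y
    have hxM : (proj M₁ * proj N₁ - proj (M₁ ⊓ N₁)) x ∈ M₁ := by
      show proj M₁ (proj N₁ x) - proj (M₁ ⊓ N₁) x ∈ M₁
      exact Submodule.sub_mem _ (proj_mem M₁ _)
        ((inf_le_left : M₁ ⊓ N₁ ≤ M₁) (proj_mem (M₁ ⊓ N₁) x))
    have hyM : (proj M₂ * proj N₂ - proj (M₂ ⊓ N₂)) y ∈ M₂ := by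
      show proj M₂ (proj N₂ y) - proj (M₂ ⊓ N₂) y ∈ M₂
      exact Submodule.sub_mem _ (proj_mem M₂ _)
        ((inf_le_left : M₂ ⊓ N₂ ≤ M₂) (proj_mem (M₂ ⊓ N₂) y))
    exact hMM _ hxM _ hyM
  · rw [sub_mul, mul_assoc, proj_comp_of_le (le_refl N₁),
      proj_comp_of_le (inf_le_right : M₁ ⊓ N₁ ≤ N₁)]
  · rw [sub_mul, mul_assoc, proj_comp_of_le (le_refl N₂),
      proj_comp_of_le (inf_le_right : M₂ ⊓ N₂ ≤ N₂)]
  · intro x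
    have horth : (inner ℂ (proj N₁ x) (proj N₂ x) : ℂ) = 0 :=
      hNN _ (proj_mem N₁ x) _ (proj_mem N₂ x)
    have hp := norm_add_sq_eq_norm_sq_add_norm_sq_of_inner_eq_zero _ _ horth
    have hsum : proj N₁ x + proj N₂ x = proj (N₁ ⊔ N₂) x := by
      rw [proj_sup oNN]; rfl
    have hle : ‖proj (N₁ ⊔ N₂) x‖ ≤ ‖x‖ := norm_proj_le _ x
    calc ‖proj N₁ x‖ * ‖proj N₁ x‖ + ‖proj N₂ x‖ * ‖proj N₂ x‖
        = ‖proj (N₁ ⊔ N₂) x‖ * ‖proj (N₁ ⊔ N₂) x‖ := by rw [← hp, hsum]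
      _ ≤ ‖x‖ * ‖x‖ := mul_self_le_mul_self (norm_nonneg _) hle
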